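/- As n → ∞, the optimal competitive ratio under a single pure tail constraint (γ, 0), given by λ(n) = 1 + (γ−1)/(1 + (γ/(n−1))·(n·((n/(n−1))^{(n−1)(1−1/(γ−1))} − 1) + 1)), converges to 1 + (γ−1)/(1 + γ(e^{1−1/(γ−1)} − 1)). In particular, for γ = 2 the limit is 2, and the limit as γ → ∞ of the limiting expression is e/(e−1). -/

import Mathlib

open Filter Real

lemma aux1 (c : ℝ) :
    Tendsto (fun x : ℝ => (1 + 1/x) ^ (x*c)) atTop (nhds (Real.exp c)) := by
  have h1 : Tendsto (fun x : ℝ => (1 + 1/x) ^ x) atTop (nhds (Real.exp 1)) := by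
    simpa using tendsto_one_add_div_rpow_exp 1
  have h2 : Tendsto (fun x : ℝ => ((1 + 1/x) ^ x) ^ c) atTop (nhds (Real.exp c)) := by
    rw [← Real.exp_one_rpow c]
    exact (Real.continuousAt_rpow_const _ c (Or.inl (Real.exp_pos 1).ne')).tendsto.comp h1
  refine h2.congr' ?_
  filter_upwards [eventually_ge_atTop (1:ℝ)] with x hx
  rw [← Real.rpow_mul]
  positivity

theorem stmt_19 (γ : ℝ) (hγ : 2 ≤ γ) :
    Tendsto (fun n : ℕ => 1 + (γ - 1) /
        (1 + (γ/((n:ℝ) - 1))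
          * ((n:ℝ)*(((n:ℝ)/((n:ℝ) - 1)) ^ (((n:ℝ) - 1)*(1 - 1/(γ - 1))) - 1) + 1)))
      atTop (nhds (1 + (γ - 1)/(1 + γ*(Real.exp (1 - 1/(γ - 1)) - 1)))) ∧
    (γ = 2 → 1 + (γ - 1)/(1 + γ*(Real.exp (1 - 1/(γ - 1)) - 1)) = 2) ∧
    Tendsto (fun g : ℝ => 1 + (g - 1)/(1 + g*(Real.exp (1 - 1/(g - 1)) - 1)))
      atTop (nhds (Real.exp 1 / (Real.exp 1 - 1))) := by
  refine ⟨?_, ?_, ?_⟩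
  · set c := 1 - 1/(γ - 1) with hc
    have hγ1 : (1:ℝ) ≤ γ - 1 := by linarith
    have hc0 : 0 ≤ c := by
      have h : 1/(γ-1) ≤ 1 := by
        rw [div_le_one (by linarith)]; linarith
      simp only [hc]; linarith
    have hec : 1 ≤ Real.exp c := by
      rw [← Real.exp_zero]; exact Real.exp_le_exp.mpr hc0
    have hden : 1 + γ*(Real.exp c - 1) ≠ 0 := by nlinarith
    have hm : Tendsto (fun n : ℕ => (n:ℝ) - 1) atTop atTop :=
      tendsto_atTop_add_const_right _ (-1) tendsto_natCast_atTop_atTop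
    have h0 : Tendsto (fun n : ℕ => 1/((n:ℝ)-1)) atTop (nhds 0) := by
      simpa [one_div, Pi.inv_def] using hm.inv_tendsto_atTop
    have hX : Tendsto (fun n : ℕ => ((n:ℝ)/((n:ℝ)-1)) ^ (((n:ℝ)-1)*c)) atTop
        (nhds (Real.exp c)) := by
      refine ((aux1 c).comp hm).congr' ?_
      filter_upwards [eventually_ge_atTop 2] with n hn
      have h2 : (2:ℝ) ≤ (n:ℝ) := by exact_mod_cast hn
      have hne : (n:ℝ) - 1 ≠ 0 := by linarith
      simp only [Function.comp_apply]
      congr 2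
      field_simp
      ring
    have hr : Tendsto (fun n : ℕ => (n:ℝ)/((n:ℝ)-1)) atTop (nhds 1) := by
      have h := tendsto_const_nhds (f := atTop (α := ℕ)) (x := (1:ℝ)) |>.add h0
      rw [add_zero] at h
      refine h.congr' ?_
      filter_upwards [eventually_ge_atTop 2] with n hn
      have h2 : (2:ℝ) ≤ (n:ℝ) := by exact_mod_cast hn
      have hne : (n:ℝ) - 1 ≠ 0 := by linarith
      field_simp
      ring
    have hD : Tendsto (fun n : ℕ => 1 + (γ/((n:ℝ) - 1))
          * ((n:ℝ)*(((n:ℝ)/((n:ℝ) - 1)) ^ (((n:ℝ) - 1)*c) - 1) + 1)) atTop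
        (nhds (1 + γ*(Real.exp c - 1))) := by
      have hXs := hX.sub (tendsto_const_nhds (f := atTop (α := ℕ)) (x := (1:ℝ)))
      have h := tendsto_const_nhds (f := atTop (α := ℕ)) (x := (1:ℝ)) |>.add
        ((tendsto_const_nhds (x := γ)).mul (((hr.mul hXs).add h0)))
      have : (1:ℝ) + γ * (1 * (Real.exp c - 1) + 0) = 1 + γ*(Real.exp c - 1) := by ring
      rw [this] at h
      refine h.congr' ?_
      filter_upwards [eventually_ge_atTop 2] with n hn
      have h2 : (2:ℝ) ≤ (n:ℝ) := by exact_mod_cast hn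
      have hne : (n:ℝ) - 1 ≠ 0 := by linarith
      set X := ((n:ℝ)/((n:ℝ)-1)) ^ (((n:ℝ)-1)*c)
      field_simp
    exact tendsto_const_nhds.add (tendsto_const_nhds.div hD hden)
  · intro h
    subst h
    norm_num
  · have h1 : Tendsto (fun g : ℝ => Real.exp (1 - 1/(g-1))) atTop (nhds (Real.exp 1)) := by
      have hm : Tendsto (fun g : ℝ => g - 1) atTop atTop :=
        tendsto_atTop_add_const_right _ (-1) tendsto_id
      have h0 : Tendsto (fun g : ℝ => 1/(g-1)) atTop (nhds 0) := by
        simpa [one_div, Pi.inv_def] using hm.inv_tendsto_atTop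
      have : Tendsto (fun g : ℝ => 1 - 1/(g-1)) atTop (nhds 1) := by
        simpa using (tendsto_const_nhds (x := (1:ℝ))).sub h0
      exact (Real.continuous_exp.continuousAt.tendsto.comp this)
    have hinv : Tendsto (fun g : ℝ => 1/g) atTop (nhds 0) := by
      simpa [one_div] using tendsto_inv_atTop_zero
    have he1 : (1:ℝ) < Real.exp 1 := by
      have := Real.add_one_le_exp (1:ℝ)
      linarith
    have hne : Real.exp 1 - 1 ≠ 0 := by linarith
    have hD : Tendsto (fun g : ℝ => (1 - 1/g)/(1/g + (Real.exp (1 - 1/(g-1)) - 1)))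
        atTop (nhds (1/(Real.exp 1 - 1))) := by
      have h := Tendsto.div ((tendsto_const_nhds (x := (1:ℝ))).sub hinv)
        (hinv.add (h1.sub tendsto_const_nhds)) (by simpa using hne)
      simpa [Pi.div_def] using h
    have hfin : Tendsto (fun g : ℝ => 1 + (1 - 1/g)/(1/g + (Real.exp (1 - 1/(g-1)) - 1)))
        atTop (nhds (1 + 1/(Real.exp 1 - 1))) := tendsto_const_nhds.add hD
    have hval : 1 + 1/(Real.exp 1 - 1) = Real.exp 1 / (Real.exp 1 - 1) := by
      field_simp
      ring
    rw [hval] at hfin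
    refine hfin.congr' ?_
    filter_upwards [eventually_ge_atTop (1:ℝ)] with g hg
    have hg0 : g ≠ 0 := by linarith
    congr 1
    have e1 : 1 - 1/g = (g-1)/g := by field_simp
    have e2 : 1/g + (Real.exp (1-1/(g-1)) - 1) = (1 + g*(Real.exp (1-1/(g-1)) - 1))/g := by
      field_simp
    rw [e1, e2, div_div_div_comm, div_self hg0, div_one]
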